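/- arXiv:0709.0113 — 3 statements merged into one kernel-verified Lean document; each statement's English description precedes it below -/
import Mathlib

section
/- Anonymity: if σ and σ' are sequences of equal length n, and there exist indices i, j with σ_i = σ'_j, σ_j = σ'_i, and σ_k = σ'_k for all k ≠ i, j (i.e., σ' is obtained from σ by swapping two entries), then σ ≈ σ'. -/
/-- Equivalence `≈` derived from the weak preorder `⪯`. -/
def eqv {X : Type*} (le : List X → List X → Prop) (σ τ : List X) : Prop :=
  le σ τ ∧ le τ σ

/-- Strict part `≺` of the weak preorder `⪯`. -/
def slt {X : Type*} (le : List X → List X → Prop) (σ τ : List X) : Prop :=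
  le σ τ ∧ ¬ le τ σ

/-- n-fold repetition `σ^n` of a sequence. -/
def rep {X : Type*} (σ : List X) (n : ℕ) : List X :=
  (List.replicate n σ).flatten


section Aux
variable {X : Type*} (le : List X → List X → Prop)
    (hrefl : ∀ σ : List X, σ ≠ [] → le σ σ)
    (htrans : ∀ σ τ ρ : List X, σ ≠ [] → τ ≠ [] → ρ ≠ [] → le σ τ → le τ ρ → le σ ρ)
    (ax23 : ∀ σ σ' σ'' : List X, σ ≠ [] → σ' ≠ [] → σ'' ≠ [] → eqv le σ' σ'' → eqv le (σ ++ σ') (σ ++ σ''))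
    (ax3 : ∀ σ σ' : List X, σ ≠ [] → σ' ≠ [] → eqv le (σ ++ σ') (σ' ++ σ))

include htrans in
lemma eqv_trans' {a b c : List X} (ha : a ≠ []) (hb : b ≠ []) (hc : c ≠ [])
    (h1 : eqv le a b) (h2 : eqv le b c) : eqv le a c :=
  ⟨htrans a b c ha hb hc h1.1 h2.1, htrans c b a hc hb ha h2.2 h1.2⟩

include htrans ax23 ax3 in
lemma eqv_append_right' {a b c : List X} (ha : a ≠ []) (hb : b ≠ []) (hc : c ≠ [])
    (h : eqv le a b) : eqv le (a ++ c) (b ++ c) := by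
  have s1 := ax3 a c ha hc
  have s2 := ax23 c a b hc ha hb h
  have s3 := ax3 c b hc hb
  have ne : ∀ (x y : List X), x ≠ [] → x ++ y ≠ [] := by
    intro x y hx; simp [hx]
  exact eqv_trans' le htrans (ne a c ha) (ne c b hc) (ne b c hb)
    (eqv_trans' le htrans (ne a c ha) (ne c a hc) (ne c b hc) s1 s2) s3

include hrefl htrans ax23 ax3 in
lemma eqv_of_perm' {a b : List X} (ha : a ≠ []) (h : a.Perm b) : eqv le a b := by
  induction h with
  | nil => exact absurd rfl ha
  | cons x l₁ ih =>
    rename_i l l'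
    rcases eq_or_ne l [] with rfl | hl
    · have : l' = [] := l₁.symm.eq_nil
      subst this; exact ⟨hrefl [x] (by simp), hrefl [x] (by simp)⟩
    · have hl' : l' ≠ [] := fun h => hl ((h ▸ l₁).eq_nil)
      exact ax23 [x] l l' (by simp) hl hl' (ih hl)
  | swap x y l =>
    rcases eq_or_ne l [] with rfl | hl
    · simpa using ax3 [y] [x] (by simp) (by simp)
    · have h := ax3 [y] [x] (by simp) (by simp)
      have := eqv_append_right' le htrans ax23 ax3 (a := [y,x]) (b := [x,y]) (c := l)
        (by simp) (by simp) hl (by simpa using h)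
      simpa using this
  | trans p q ih1 ih2 =>
    rename_i l₁ l₂ l₃
    have h2 : l₂ ≠ [] := fun h => ha ((h ▸ p).eq_nil)
    have h3 : l₃ ≠ [] := fun h => h2 ((h ▸ q).eq_nil)
    exact eqv_trans' le htrans ha h2 h3 (ih1 ha) (ih2 h2)
end Aux

lemma perm_of_swap' {X : Type*} (σ σ' : List X)
    (hlen : σ.length = σ'.length)
    (i j : ℕ) (hi : i < σ.length) (hj : j < σ.length)
    (h1 : σ.get ⟨i, hi⟩ = σ'.get ⟨j, hlen ▸ hj⟩)
    (h2 : σ.get ⟨j, hj⟩ = σ'.get ⟨i, hlen ▸ hi⟩)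
    (h3 : ∀ k (hk : k < σ.length), k ≠ i → k ≠ j → σ.get ⟨k, hk⟩ = σ'.get ⟨k, hlen ▸ hk⟩) :
    σ.Perm σ' := by
  have key : σ' = List.ofFn (σ.get ∘ Equiv.swap ⟨i, hi⟩ ⟨j, hj⟩) := by
    apply List.ext_get
    · simp [← hlen]
    · intro k hk1 hk2
      have hk : k < σ.length := by simpa using hk2
      simp only [List.get_ofFn, Function.comp_apply]
      rcases eq_or_ne k i with rfl | hki
      · rw [show (Fin.cast (by simp) ⟨k, hk2⟩ : Fin σ.length) = ⟨k, hk⟩ from rfl,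
          Equiv.swap_apply_left]
        exact (h2.symm)
      rcases eq_or_ne k j with rfl | hkj
      · rw [show (Fin.cast (by simp) ⟨k, hk2⟩ : Fin σ.length) = ⟨k, hk⟩ from rfl,
          Equiv.swap_apply_right]
        exact (h1.symm)
      · rw [show (Fin.cast (by simp) ⟨k, hk2⟩ : Fin σ.length) = ⟨k, hk⟩ from rfl,
          Equiv.swap_apply_of_ne_of_ne (by simpa using hki) (by simpa using hkj)]
        exact (h3 k hk hki hkj).symm
  rw [key]
  exact ((Equiv.Perm.ofFn_comp_perm _ σ.get).trans (by rw [List.ofFn_get])).symm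

theorem stmt2 {X : Type*}
    (le : List X → List X → Prop)
    (hrefl : ∀ σ : List X, σ ≠ [] → le σ σ)
    (htrans : ∀ σ τ ρ : List X, σ ≠ [] → τ ≠ [] → ρ ≠ [] → le σ τ → le τ ρ → le σ ρ)
    (htotal : ∀ σ τ : List X, σ ≠ [] → τ ≠ [] → le σ τ ∨ le τ σ)
    (ax23 : ∀ σ σ' σ'' : List X, σ ≠ [] → σ' ≠ [] → σ'' ≠ [] → eqv le σ' σ'' → eqv le (σ ++ σ') (σ ++ σ''))
    (ax3 : ∀ σ σ' : List X, σ ≠ [] → σ' ≠ [] → eqv le (σ ++ σ') (σ' ++ σ))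
    (σ σ' : List X) (hσ : σ ≠ []) (hσ' : σ' ≠ [])
    (hlen : σ.length = σ'.length)
    (i j : ℕ) (hi : i < σ.length) (hj : j < σ.length)
    (h1 : σ.get ⟨i, hi⟩ = σ'.get ⟨j, hlen ▸ hj⟩)
    (h2 : σ.get ⟨j, hj⟩ = σ'.get ⟨i, hlen ▸ hi⟩)
    (h3 : ∀ k (hk : k < σ.length), k ≠ i → k ≠ j → σ.get ⟨k, hk⟩ = σ'.get ⟨k, hlen ▸ hk⟩) :
    eqv le σ σ' :=
  eqv_of_perm' le hrefl htrans ax23 ax3 hσ (perm_of_swap' σ σ' hlen i j hi hj h1 h2 h3)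
end

section
/- Weak Pareto (weak version): if σ and σ' have equal length and σ_i ≤ σ'_i for every index i (pointwise domination), then σ ⪯ σ'. -/
theorem stmt4 {X : Type*} [LinearOrder X]
    (le : List X → List X → Prop)
    (hrefl : ∀ σ : List X, σ ≠ [] → le σ σ)
    (htrans : ∀ σ τ ρ : List X, σ ≠ [] → τ ≠ [] → ρ ≠ [] → le σ τ → le τ ρ → le σ ρ)
    (htotal : ∀ σ τ : List X, σ ≠ [] → τ ≠ [] → le σ τ ∨ le τ σ)
    (ax11 : ∀ x x' : X, x < x' → slt le [x] [x'])
    (ax12 : ∀ x x' : X, x = x' → eqv le [x] [x'])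
    (ax21 : ∀ σ : List X, σ ≠ [] → eqv le (σ ++ σ) σ)
    (ax22 : ∀ σ σ' σ'' : List X, σ ≠ [] → σ' ≠ [] → σ'' ≠ [] → slt le σ' σ'' → slt le (σ ++ σ') (σ ++ σ''))
    (ax23 : ∀ σ σ' σ'' : List X, σ ≠ [] → σ' ≠ [] → σ'' ≠ [] → eqv le σ' σ'' → eqv le (σ ++ σ') (σ ++ σ''))
    (ax3 : ∀ σ σ' : List X, σ ≠ [] → σ' ≠ [] → eqv le (σ ++ σ') (σ' ++ σ))
    (σ σ' : List X) (hσ : σ ≠ []) (hσ' : σ' ≠ [])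
    (hlen : σ.length = σ'.length)
    (hdom : ∀ k (hk : k < σ.length), σ.get ⟨k, hk⟩ ≤ σ'.get ⟨k, hlen ▸ hk⟩) :
    le σ σ' := by
  -- single-element monotonicity
  have hsingle : ∀ x x' : X, x ≤ x' → le [x] [x'] := by
    intro x x' h
    rcases lt_or_eq_of_le h with h | h
    · exact (ax11 x x' h).1
    · exact (ax12 x x' h).1
  -- weak left-prepend monotonicity
  have hpre : ∀ a b c : List X, a ≠ [] → b ≠ [] → c ≠ [] → le b c → le (a ++ b) (a ++ c) := by
    intro a b c ha hb hc h
    by_cases h' : le c b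
    · exact (ax23 a b c ha hb hc ⟨h, h'⟩).1
    · exact (ax22 a b c ha hb hc ⟨h, h'⟩).1
  -- weak right-append monotonicity
  have happ : ∀ a b c : List X, a ≠ [] → b ≠ [] → c ≠ [] → le b c → le (b ++ a) (c ++ a) := by
    intro a b c ha hb hc h
    have hba := List.append_ne_nil_of_left_ne_nil hb a
    have hab := List.append_ne_nil_of_left_ne_nil ha b
    have hac := List.append_ne_nil_of_left_ne_nil ha c
    have hca := List.append_ne_nil_of_left_ne_nil hc a
    have h1 : le (b ++ a) (a ++ b) := (ax3 b a hb ha).1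
    have h2 : le (a ++ b) (a ++ c) := hpre a b c ha hb hc h
    have h3 : le (a ++ c) (c ++ a) := (ax3 a c ha hc).1
    exact htrans _ _ _ hba hac hca (htrans _ _ _ hba hab hac h1 h2) h3
  revert hσ hσ' hlen hdom
  induction σ generalizing σ' with
  | nil => intro hσ; exact absurd rfl hσ
  | cons x t ih =>
    intro hσ hσ' hlen hdom
    match σ' with
    | [] => exact absurd rfl hσ'
    | x' :: t' =>
      have hx : x ≤ x' := hdom 0 (Nat.succ_pos _)
      match t, t' with
      | [], [] => exact hsingle x x' hx
      | [], _ :: _ => simp at hlen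
      | _ :: _, [] => simp at hlen
      | a :: t, a' :: t' =>
        have ht : (a :: t : List X) ≠ [] := by simp
        have ht' : (a' :: t' : List X) ≠ [] := by simp
        have hlen' : (a :: t).length = (a' :: t').length := by
          simpa using hlen
        have hdom' : ∀ k (hk : k < (a :: t).length),
            (a :: t).get ⟨k, hk⟩ ≤ (a' :: t').get ⟨k, hlen' ▸ hk⟩ := by
          intro k hk
          exact hdom (k + 1) (Nat.succ_lt_succ hk)
        have h1 : le ([x] ++ (a :: t)) ([x'] ++ (a :: t)) :=
          happ (a :: t) [x] [x'] ht (by simp) (by simp) (hsingle x x' hx)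
        have h2 : le ([x'] ++ (a :: t)) ([x'] ++ (a' :: t')) :=
          hpre [x'] (a :: t) (a' :: t') (by simp) ht ht' (ih (a' :: t') ht ht' hlen' hdom')
        exact htrans _ _ _ (by simp) (by simp) (by simp) h1 h2
end

section
/- Determination by equal-length comparisons: for nonempty sequences σ of length m ≥ 1 and σ' of length n ≥ 1, σ ⪯ σ' holds if and only if σ^n ⪯ σ'^m (a comparison of two sequences of equal length mn). In particular, the restriction of ⪯ to pairs of equal-length sequences determines ⪯ on all of Σ. -/
lemma rep_succ {X : Type*} (σ : List X) (n : ℕ) : rep σ (n+1) = σ ++ rep σ n := by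
  simp [rep, List.replicate_succ]

lemma rep_ne {X : Type*} (σ : List X) (hσ : σ ≠ []) (n : ℕ) : rep σ (n+1) ≠ [] := by
  simp [rep_succ, hσ]

lemma rep_eqv {X : Type*}
    (le : List X → List X → Prop)
    (hrefl : ∀ σ : List X, σ ≠ [] → le σ σ)
    (htrans : ∀ σ τ ρ : List X, σ ≠ [] → τ ≠ [] → ρ ≠ [] → le σ τ → le τ ρ → le σ ρ)
    (ax21 : ∀ σ : List X, σ ≠ [] → eqv le (σ ++ σ) σ)
    (ax23 : ∀ σ σ' σ'' : List X, σ ≠ [] → σ' ≠ [] → σ'' ≠ [] → eqv le σ' σ'' → eqv le (σ ++ σ') (σ ++ σ''))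
    (σ : List X) (hσ : σ ≠ []) : ∀ n : ℕ, eqv le (rep σ (n+1)) σ := by
  intro n
  induction n with
  | zero => simpa [rep_succ, rep] using ⟨hrefl σ hσ, hrefl σ hσ⟩
  | succ k ih =>
    have h1 : eqv le (σ ++ rep σ (k+1)) (σ ++ σ) :=
      ax23 σ _ σ hσ (rep_ne σ hσ k) hσ ih
    have h2 := ax21 σ hσ
    have hne1 : σ ++ rep σ (k+1) ≠ [] := by simp [hσ]
    have hne2 : σ ++ σ ≠ [] := by simp [hσ]
    rw [rep_succ]
    exact ⟨htrans _ _ _ hne1 hne2 hσ h1.1 h2.1,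
           htrans _ _ _ hσ hne2 hne1 h2.2 h1.2⟩

theorem stmt8 {X : Type*}
    (le : List X → List X → Prop)
    (hrefl : ∀ σ : List X, σ ≠ [] → le σ σ)
    (htrans : ∀ σ τ ρ : List X, σ ≠ [] → τ ≠ [] → ρ ≠ [] → le σ τ → le τ ρ → le σ ρ)
    (htotal : ∀ σ τ : List X, σ ≠ [] → τ ≠ [] → le σ τ ∨ le τ σ)
    (ax21 : ∀ σ : List X, σ ≠ [] → eqv le (σ ++ σ) σ)
    (ax22 : ∀ σ σ' σ'' : List X, σ ≠ [] → σ' ≠ [] → σ'' ≠ [] → slt le σ' σ'' → slt le (σ ++ σ') (σ ++ σ''))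
    (ax23 : ∀ σ σ' σ'' : List X, σ ≠ [] → σ' ≠ [] → σ'' ≠ [] → eqv le σ' σ'' → eqv le (σ ++ σ') (σ ++ σ''))
    (ax3 : ∀ σ σ' : List X, σ ≠ [] → σ' ≠ [] → eqv le (σ ++ σ') (σ' ++ σ))
    (σ σ' : List X) (hσ : σ ≠ []) (hσ' : σ' ≠ []) :
    le σ σ' ↔ le (rep σ σ'.length) (rep σ' σ.length) := by
  obtain ⟨n, hn⟩ : ∃ n, σ'.length = n + 1 :=
    ⟨σ'.length - 1, by have := List.length_pos_iff.mpr hσ'; omega⟩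
  obtain ⟨m, hm⟩ : ∃ m, σ.length = m + 1 :=
    ⟨σ.length - 1, by have := List.length_pos_iff.mpr hσ; omega⟩
  have h1 := rep_eqv le hrefl htrans ax21 ax23 σ hσ n
  have h2 := rep_eqv le hrefl htrans ax21 ax23 σ' hσ' m
  rw [hn, hm]
  have hne1 := rep_ne σ hσ n
  have hne2 := rep_ne σ' hσ' m
  constructor
  · intro h
    exact htrans _ _ _ hne1 hσ' hne2 (htrans _ _ _ hne1 hσ hσ' h1.1 h) h2.2
  · intro h
    exact htrans _ _ _ hσ hne2 hσ' (htrans _ _ _ hσ hne1 hne2 h1.2 h) h2.1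
end
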